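/- (Petz map of a unitary dilation) For a channel E[ρ] = Tr_B[U(ρ⊗β)U†] and full-rank reference α with E[α] full rank, the Petz map satisfies \hat{E}_α[ρ] = Tr_B{ U† √(U(α⊗β)U†) [ ((E[α])^{-1/2} ρ (E[α])^{-1/2}) ⊗ 𝟙 ] √(U(α⊗β)U†) U }. -/

import Mathlib

open Matrix Kronecker ComplexOrder

/-- The partial trace over the second (environment) factor. -/
noncomputable def trB {n m : Type*} [Fintype n] [Fintype m]
    (M : Matrix (n × m) (n × m) ℂ) : Matrix n n ℂ :=
  Matrix.of fun i j => ∑ b, M (i, b) (j, b)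

/-- The positive semidefinite square root of a positive semidefinite matrix
(the definition removed from Mathlib, restored verbatim). -/
noncomputable def Matrix.PosSemidef.sqrt {n 𝕜 : Type*} [Fintype n] [DecidableEq n] [RCLike 𝕜]
    {A : Matrix n n 𝕜} (hA : A.PosSemidef) : Matrix n n 𝕜 :=
  (hA.1.eigenvectorUnitary : Matrix n n 𝕜) *
    diagonal (((↑) : ℝ → 𝕜) ∘ (√·) ∘ hA.1.eigenvalues) *
    (star hA.1.eigenvectorUnitary : Matrix n n 𝕜)

section sqrtPort
open scoped MatrixOrder

lemma Matrix.PosSemidef.sqrt_eq_cfcSqrt {n : Type*} [Fintype n] [DecidableEq n]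
    {A : Matrix n n ℂ} (hA : A.PosSemidef) : hA.sqrt = CFC.sqrt A := by
  have h0 : (0 : Matrix n n ℂ) ≤ A := Matrix.nonneg_iff_posSemidef.mpr hA
  rw [CFC.sqrt_eq_real_sqrt A h0, cfcₙ_eq_cfc, hA.1.cfc_eq]
  rfl

lemma Matrix.PosSemidef.posSemidef_sqrt {n : Type*} [Fintype n] [DecidableEq n]
    {A : Matrix n n ℂ} (hA : A.PosSemidef) : hA.sqrt.PosSemidef := by
  rw [hA.sqrt_eq_cfcSqrt]
  exact Matrix.nonneg_iff_posSemidef.mp (CFC.sqrt_nonneg A)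

lemma Matrix.PosSemidef.sqrt_mul_self {n : Type*} [Fintype n] [DecidableEq n]
    {A : Matrix n n ℂ} (hA : A.PosSemidef) : hA.sqrt * hA.sqrt = A := by
  rw [hA.sqrt_eq_cfcSqrt]
  exact CFC.sqrt_mul_sqrt_self A (Matrix.nonneg_iff_posSemidef.mpr hA)

lemma Matrix.PosSemidef.eq_sqrt_of_sq_eq {n : Type*} [Fintype n] [DecidableEq n]
    {A B : Matrix n n ℂ} (hB : B.PosSemidef) (hA : A.PosSemidef) (h : B ^ 2 = A) :
    B = hA.sqrt := by
  rw [hA.sqrt_eq_cfcSqrt]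
  exact (CFC.sqrt_unique (by rw [← h, pow_two]) (Matrix.nonneg_iff_posSemidef.mpr hB)).symm

end sqrtPort

lemma kron_conjTranspose {n m p q : Type*}
    (A : Matrix n p ℂ) (B : Matrix m q ℂ) : (A ⊗ₖ B)ᴴ = Aᴴ ⊗ₖ Bᴴ := by
  ext ⟨i, j⟩ ⟨k, l⟩
  simp [Matrix.conjTranspose_apply, Matrix.kronecker_apply, mul_comm]

lemma trB_conj {n m : Type*} [Fintype n] [DecidableEq n] [Fintype m] [DecidableEq m]
    (A B : Matrix n n ℂ) (N : Matrix (n × m) (n × m) ℂ) :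
    trB ((A ⊗ₖ (1 : Matrix m m ℂ)) * N * (B ⊗ₖ (1 : Matrix m m ℂ))) = A * trB N * B := by
  ext i j
  simp only [trB, Matrix.of_apply, Matrix.mul_apply, Matrix.kronecker_apply,
    Fintype.sum_prod_type, Matrix.one_apply, mul_ite, mul_zero, ite_mul, zero_mul,
    Finset.sum_ite_irrel, Finset.sum_const_zero,
    Finset.sum_ite_eq, Finset.sum_ite_eq', Finset.mem_univ, if_true,
    Finset.mul_sum, Finset.sum_mul]
  rw [Finset.sum_comm]
  refine Finset.sum_congr rfl fun y _ => ?_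
  rw [Finset.sum_comm]
  exact Finset.sum_congr rfl fun k _ => Finset.sum_congr rfl fun b _ => by ring

lemma kron_posSemidef {n m : Type*} [Fintype n] [DecidableEq n] [Fintype m] [DecidableEq m]
    {A : Matrix n n ℂ} {B : Matrix m m ℂ} (hA : A.PosSemidef) (hB : B.PosSemidef) :
    (A ⊗ₖ B).PosSemidef := by
  have h : A ⊗ₖ B = (hA.sqrt ⊗ₖ hB.sqrt)ᴴ * (hA.sqrt ⊗ₖ hB.sqrt) := by
    rw [kron_conjTranspose, ← Matrix.mul_kronecker_mul,
      hA.posSemidef_sqrt.isHermitian.eq, hB.posSemidef_sqrt.isHermitian.eq,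
      hA.sqrt_mul_self, hB.sqrt_mul_self]
  rw [h]
  exact Matrix.posSemidef_conjTranspose_mul_self _

/-- Petz map of a unitary dilation: for the channel `E[ρ] = Tr_B[U(ρ⊗β)U†]`
with full-rank reference `α` and full-rank output `E[α]`, the Petz map
`√α E†[(E[α])^{-1/2} ρ (E[α])^{-1/2}] √α` (with
`E†[Y] = Tr_B[(𝟙⊗√β)U†(Y⊗𝟙)U(𝟙⊗√β)]`) equals
`ρ ↦ Tr_B{ U† √(U(α⊗β)U†) [((E[α])^{-1/2} ρ (E[α])^{-1/2}) ⊗ 𝟙] √(U(α⊗β)U†) U }`. -/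
theorem petz_of_unitary_dilation
    {n m : Type*} [Fintype n] [DecidableEq n] [Fintype m] [DecidableEq m]
    (U : Matrix (n × m) (n × m) ℂ) (hU : U ∈ Matrix.unitaryGroup (n × m) ℂ)
    (α : Matrix n n ℂ) (β : Matrix m m ℂ)
    (hα : α.PosDef) (hβ : β.PosSemidef) (hαt : α.trace = 1) (hβt : β.trace = 1)
    (hEα : (trB (U * (α ⊗ₖ β) * Uᴴ)).PosDef)
    (hω : (U * (α ⊗ₖ β) * Uᴴ).PosSemidef) :
    ∀ ρ : Matrix n n ℂ,
      hα.posSemidef.sqrt *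
        trB (((1 : Matrix n n ℂ) ⊗ₖ hβ.sqrt) * Uᴴ *
            ((((hEα.posSemidef.sqrt)⁻¹) * ρ * ((hEα.posSemidef.sqrt)⁻¹)) ⊗ₖ (1 : Matrix m m ℂ)) *
            U * ((1 : Matrix n n ℂ) ⊗ₖ hβ.sqrt)) *
        hα.posSemidef.sqrt
      = trB (Uᴴ *
          (hω.sqrt *
            ((((hEα.posSemidef.sqrt)⁻¹) * ρ * ((hEα.posSemidef.sqrt)⁻¹)) ⊗ₖ (1 : Matrix m m ℂ)) *
            hω.sqrt) * U) := by
  intro ρ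
  set a := hα.posSemidef.sqrt with ha
  set b := hβ.sqrt with hb
  set X := (hEα.posSemidef.sqrt)⁻¹ * ρ * (hEα.posSemidef.sqrt)⁻¹ with hX
  set M := X ⊗ₖ (1 : Matrix m m ℂ) with hM
  have hUU : Uᴴ * U = 1 := by
    simpa [Matrix.star_eq_conjTranspose] using (Matrix.mem_unitaryGroup_iff'.mp hU)
  have hUU' : U * Uᴴ = 1 := by
    simpa [Matrix.star_eq_conjTranspose] using (Matrix.mem_unitaryGroup_iff.mp hU)
  -- square root of the kronecker product
  set S := a ⊗ₖ b with hS
  have hSps : S.PosSemidef :=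
    kron_posSemidef hα.posSemidef.posSemidef_sqrt hβ.posSemidef_sqrt
  have hSsq : S * S = α ⊗ₖ β := by
    rw [hS, ← Matrix.mul_kronecker_mul, ha, hb,
      hα.posSemidef.sqrt_mul_self, hβ.sqrt_mul_self]
  -- hω.sqrt = U * S * Uᴴ
  have hkey : U * S * Uᴴ = hω.sqrt := by
    refine Matrix.PosSemidef.eq_sqrt_of_sq_eq ?_ hω ?_
    · exact hSps.mul_mul_conjTranspose_same U
    · calc (U * S * Uᴴ) ^ 2 = U * S * (Uᴴ * U) * S * Uᴴ := by
            rw [pow_two]; simp only [mul_assoc]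
        _ = U * (α ⊗ₖ β) * Uᴴ := by rw [hUU, mul_one, mul_assoc U S S, hSsq]
  -- rewrite RHS
  have hrhs : Uᴴ * (hω.sqrt * M * hω.sqrt) * U = S * (Uᴴ * M * U) * S := by
    rw [← hkey]
    calc Uᴴ * (U * S * Uᴴ * M * (U * S * Uᴴ)) * U
        = (Uᴴ * U) * S * (Uᴴ * M * U) * S * (Uᴴ * U) := by simp only [mul_assoc]
      _ = S * (Uᴴ * M * U) * S := by rw [hUU, one_mul, mul_one]
  rw [hrhs]
  -- split S = (a ⊗ₖ 1) * (1 ⊗ₖ b) = (1 ⊗ₖ b) * (a ⊗ₖ 1)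
  have hS1 : S = (a ⊗ₖ (1 : Matrix m m ℂ)) * ((1 : Matrix n n ℂ) ⊗ₖ b) := by
    rw [← Matrix.mul_kronecker_mul, mul_one, one_mul]
  have hS2 : S = ((1 : Matrix n n ℂ) ⊗ₖ b) * (a ⊗ₖ (1 : Matrix m m ℂ)) := by
    rw [← Matrix.mul_kronecker_mul, mul_one, one_mul]
  have : S * (Uᴴ * M * U) * S
      = (a ⊗ₖ (1 : Matrix m m ℂ)) *
        (((1 : Matrix n n ℂ) ⊗ₖ b) * Uᴴ * M * U * ((1 : Matrix n n ℂ) ⊗ₖ b)) *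
        (a ⊗ₖ (1 : Matrix m m ℂ)) := by
    nth_rewrite 1 [hS1]
    rw [hS2]
    simp only [mul_assoc]
  rw [this, trB_conj]
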